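/- For any n ≥ 1 and integers a_1,...,a_n ≥ 1, the product of formal Fourier series δ_+^{(a_1)}(x)···δ_+^{(a_n)}(x) equals (-i)^{n-1} Σ_{j=1}^{n-1+Σa_i} C^{a_1,...,a_n}_j δ_+^{(j)}(x), where C^{a_1,...,a_n}_j = (-1)^{(n-1+Σa_i-j)/2} C̃^{a_1,...,a_n}_j if j ≡ n-1+Σa_i (mod 2) and 0 otherwise. -/

import Mathlib

open Polynomial Finset

noncomputable def Fa (c : ℕ) : Polynomial ℚ :=
  (∑ i ∈ Finset.range (c + 1),
      Polynomial.C (_root_.bernoulli i * ((c + 1).choose i) / (c + 1)) *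
        Polynomial.X ^ (c + 1 - i)).comp (Polynomial.X + 1)

lemma Fa_eval (c N : ℕ) : (Fa c).eval (N : ℚ) = ∑ k ∈ Finset.range (N + 1), (k : ℚ) ^ c := by
  rw [Fa, eval_comp]
  have h := sum_range_pow (N + 1) c
  push_cast at h
  rw [h]
  simp only [eval_finset_sum, eval_mul, eval_C, eval_pow, eval_add, eval_X, eval_one]
  exact Finset.sum_congr rfl fun i _ => by ring

lemma Fa_natDegree (c : ℕ) : (Fa c).natDegree ≤ c + 1 := by
  rw [Fa, natDegree_comp]
  have h1 : (Polynomial.X + 1 : Polynomial ℚ).natDegree = 1 := by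
    simpa using natDegree_X_add_C (1 : ℚ)
  rw [h1, mul_one]
  refine natDegree_sum_le_of_forall_le _ _ fun i hi => ?_
  refine (natDegree_C_mul_le _ _).trans ?_
  simp [natDegree_X_pow]

lemma poly_eq_of_nat_eval {f g : Polynomial ℚ} (h : ∀ M : ℕ, f.eval (M : ℚ) = g.eval (M : ℚ)) :
    f = g := by
  have h0 : f - g = 0 := by
    apply Polynomial.eq_zero_of_infinite_isRoot
    apply Set.Infinite.mono (s := Set.range ((↑) : ℕ → ℚ))
    · rintro x ⟨M, rfl⟩
      simp [Polynomial.IsRoot, h M]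
    · exact Set.infinite_range_of_injective Nat.cast_injective
  linear_combination (norm := ring_nf) h0

lemma Fa_eval_neg_one (c : ℕ) : (Fa c).eval (-1) = 0 := by
  rw [Fa, eval_comp]
  simp only [eval_add, eval_X, eval_one, neg_add_cancel]
  rw [eval_finset_sum]
  apply Finset.sum_eq_zero
  intro i hi
  simp only [eval_mul, eval_C, eval_pow, eval_X]
  rw [zero_pow (by simp at hi; omega), mul_zero]

lemma Fa_rec (c : ℕ) (x : ℚ) : (Fa c).eval x - (Fa c).eval (x - 1) = x ^ c := by
  have key : Fa c - (Fa c).comp (Polynomial.X - 1) = Polynomial.X ^ c := by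
    apply poly_eq_of_nat_eval
    intro M
    simp only [eval_sub, eval_comp, eval_X, eval_one, eval_pow]
    rcases M with - | M
    · have h1 : ((0 : ℕ) : ℚ) - 1 = -1 := by push_cast; ring
      rw [h1, Fa_eval_neg_one, Fa_eval]
      simp
    · have h1 : ((M + 1 : ℕ) : ℚ) - 1 = (M : ℚ) := by push_cast; ring
      rw [h1, Fa_eval, Fa_eval, Finset.sum_range_succ]
      push_cast
      ring
  have := congrArg (Polynomial.eval x) key
  simpa [eval_comp] using this
lemma Fa_eval_zero (c : ℕ) (hc : 1 ≤ c) : (Fa c).eval 0 = 0 := by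
  have := Fa_eval c 0
  simpa [zero_pow (by omega : c ≠ 0)] using this

lemma Fa_reflect_nat (c : ℕ) (hc : 1 ≤ c) (M : ℕ) :
    (Fa c).eval (-(M : ℚ)) = (-1) ^ (c + 1) * ((Fa c).eval (M : ℚ) - (M : ℚ) ^ c) := by
  induction M with
  | zero =>
      simp only [Nat.cast_zero, neg_zero, Fa_eval_zero c hc, zero_pow (by omega : c ≠ 0)]
      ring
  | succ M ih =>
      have h1 := Fa_rec c (-(M : ℚ))
      have h2 := Fa_rec c ((M : ℚ) + 1)
      have hneg : (-(M : ℚ)) ^ c = (-1) ^ c * (M : ℚ) ^ c := by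
        rw [neg_pow]
      have hc1 : ((-1 : ℚ)) ^ (c + 1) = -(-1 : ℚ) ^ c := by ring
      push_cast
      have e1 : (-(M : ℚ) - 1) = -((M : ℚ) + 1) := by ring
      have e2 : ((M : ℚ) + 1 - 1) = (M : ℚ) := by ring
      rw [e1, hneg] at h1
      rw [e2] at h2
      linear_combination (-1 : ℚ) * h1 + ih - ((-1 : ℚ)) ^ (c + 1) * h2

lemma Fa_reflect (c : ℕ) (hc : 1 ≤ c) (x : ℚ) :
    (Fa c).eval (-x) = (-1) ^ (c + 1) * ((Fa c).eval x - x ^ c) := by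
  have key : (Fa c).comp (-Polynomial.X) =
      Polynomial.C ((-1 : ℚ) ^ (c + 1)) * (Fa c - Polynomial.X ^ c) := by
    apply poly_eq_of_nat_eval
    intro M
    simp [eval_comp, Fa_reflect_nat c hc M]
  have := congrArg (Polynomial.eval x) key
  simpa [eval_comp] using this
noncomputable def Fab (a b : ℕ) : Polynomial ℚ :=
  ∑ l ∈ Finset.range (b + 1),
    Polynomial.C ((-1 : ℚ) ^ (l + b) * (b.choose l : ℚ)) * Polynomial.X ^ l * Fa (a + (b - l))

lemma Fab_eval (a b N : ℕ) :
    (Fab a b).eval (N : ℚ) =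
      ∑ k ∈ Finset.range (N + 1), (k : ℚ) ^ a * ((N - k : ℕ) : ℚ) ^ b := by
  have hcast : ∀ k ∈ Finset.range (N + 1),
      (k : ℚ) ^ a * ((N - k : ℕ) : ℚ) ^ b = (k : ℚ) ^ a * ((N : ℚ) - (k : ℚ)) ^ b := by
    intro k hk
    rw [Nat.cast_sub (by simp at hk; omega)]
  rw [Finset.sum_congr rfl hcast]
  simp only [Fab, eval_finset_sum, eval_mul, eval_C, eval_pow, eval_X, Fa_eval]
  have expand : ∀ k ∈ Finset.range (N + 1),
      (k : ℚ) ^ a * ((N : ℚ) - (k : ℚ)) ^ b =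
        ∑ l ∈ Finset.range (b + 1),
          (k : ℚ) ^ a * ((-1 : ℚ) ^ (l + b) * (N : ℚ) ^ l * (k : ℚ) ^ (b - l) *
            (b.choose l : ℚ)) := by
    intro k _
    rw [sub_pow, Finset.mul_sum]
  rw [Finset.sum_congr rfl expand, Finset.sum_comm]
  apply Finset.sum_congr rfl
  intro l hl
  rw [Finset.mul_sum]
  apply Finset.sum_congr rfl
  intro k hk
  rw [pow_add]
  ring

lemma Fab_natDegree (a b : ℕ) : (Fab a b).natDegree ≤ a + b + 1 := by
  refine natDegree_sum_le_of_forall_le _ _ fun l hl => ?_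
  simp only [Finset.mem_range] at hl
  refine natDegree_mul_le.trans ?_
  have h1 : (Polynomial.C ((-1 : ℚ) ^ (l + b) * (b.choose l : ℚ)) *
      Polynomial.X ^ l).natDegree ≤ l := by
    refine (natDegree_C_mul_le _ _).trans ?_
    simp [natDegree_X_pow]
  have h2 := Fa_natDegree (a + (b - l))
  omega

lemma Fab_reflect (a b : ℕ) (ha : 1 ≤ a) (hb : 1 ≤ b) (x : ℚ) :
    (Fab a b).eval (-x) = (-1) ^ (a + b + 1) * (Fab a b).eval x := by
  simp only [Fab, eval_finset_sum, eval_mul, eval_C, eval_pow, eval_X]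
  rw [Finset.mul_sum, ← sub_eq_zero, ← Finset.sum_sub_distrib]
  have key : ∀ l ∈ Finset.range (b + 1),
      (-1 : ℚ) ^ (l + b) * (b.choose l : ℚ) * (-x) ^ l * (Fa (a + (b - l))).eval (-x) -
        (-1 : ℚ) ^ (a + b + 1) *
          ((-1 : ℚ) ^ (l + b) * (b.choose l : ℚ) * x ^ l * (Fa (a + (b - l))).eval x) =
      ((-1 : ℚ) ^ a * x ^ (a + b)) * ((-1 : ℚ) ^ l * (b.choose l : ℚ)) := by
    intro l hl
    simp only [Finset.mem_range] at hl
    obtain ⟨m, hm⟩ : ∃ m, b = l + m := ⟨b - l, by omega⟩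
    rw [hm]
    rw [show l + m - l = m by omega]
    rw [Fa_reflect (a + m) (by omega) x]
    have e1 : ((-1 : ℚ)) ^ (l * 3) = (-1) ^ l := by
      rw [pow_mul]
      rcases neg_one_pow_eq_or ℚ l with h | h <;> rw [h] <;> norm_num
    have e2 : ((-1 : ℚ)) ^ (m * 2) = 1 := by
      rw [pow_mul]
      rcases neg_one_pow_eq_or ℚ m with h | h <;> rw [h] <;> norm_num
    ring_nf
    rw [e1, e2]
    ring
  rw [Finset.sum_congr rfl key, ← Finset.mul_sum]
  have h := Int.alternating_sum_range_choose (n := b)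
  rw [if_neg (by omega)] at h
  have h2 : ∑ l ∈ Finset.range (b + 1), ((-1 : ℚ) ^ l * (b.choose l : ℚ)) = 0 := by
    have := congrArg (Int.cast : ℤ → ℚ) h
    push_cast at this
    simpa using this
  rw [h2, mul_zero]
lemma coeff_comp_neg (p : Polynomial ℚ) (k : ℕ) :
    (p.comp (-Polynomial.X)).coeff k = (-1) ^ k * p.coeff k := by
  rw [comp_eq_sum_left, Polynomial.sum_def, finset_sum_coeff]
  have hterm : ∀ n : ℕ, (Polynomial.C (p.coeff n) * (-Polynomial.X) ^ n).coeff k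
      = if k = n then p.coeff n * (-1 : ℚ) ^ n else 0 := by
    intro n
    rw [neg_pow, show ((-1 : Polynomial ℚ)) ^ n = Polynomial.C ((-1 : ℚ) ^ n) by
      rw [map_pow, map_neg, map_one], ← mul_assoc, ← Polynomial.C_mul,
      Polynomial.coeff_C_mul, Polynomial.coeff_X_pow, mul_ite, mul_one, mul_zero]
  rw [Finset.sum_congr rfl fun n _ => hterm n,
    Finset.sum_ite_eq p.support k fun n => p.coeff n * (-1 : ℚ) ^ n]
  by_cases hk : k ∈ p.support
  · rw [if_pos hk]; ring
  · rw [if_neg hk]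
    rw [Polynomial.notMem_support_iff] at hk
    rw [hk, mul_zero]

lemma neg_one_pow_mod {M : Type*} [Monoid M] [HasDistribNeg M] (j : ℕ) :
    ((-1 : M)) ^ j = (-1) ^ (j % 2) := by
  conv_lhs => rw [← Nat.div_add_mod j 2]
  rw [pow_add, pow_mul, neg_one_sq, one_pow, one_mul]

lemma neg_one_pow_mod_eq {M : Type*} [Monoid M] [HasDistribNeg M] {j d : ℕ}
    (h : j % 2 = d % 2) : ((-1 : M)) ^ j = (-1) ^ d := by
  rw [neg_one_pow_mod j, neg_one_pow_mod d, h]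

lemma parity_coeff {q : Polynomial ℚ} {d : ℕ}
    (hq : ∀ x : ℚ, q.eval (-x) = (-1) ^ d * q.eval x) {j : ℕ} (hj : ¬ j % 2 = d % 2) :
    q.coeff j = 0 := by
  have hcomp : q.comp (-Polynomial.X) = Polynomial.C ((-1 : ℚ) ^ d) * q :=
    Polynomial.funext fun r => by
      simp only [eval_comp, eval_neg, eval_X, eval_mul, eval_C]
      exact hq r
  have h1 := coeff_comp_neg q j
  rw [hcomp, Polynomial.coeff_C_mul] at h1
  have hpar : ((-1 : ℚ)) ^ d = -(-1 : ℚ) ^ j := by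
    rw [neg_one_pow_mod d, neg_one_pow_mod j]
    rcases Nat.mod_two_eq_zero_or_one j with h' | h' <;>
      rcases Nat.mod_two_eq_zero_or_one d with h'' | h''
    · exact absurd (h'.trans h''.symm) hj
    · rw [h', h'']; norm_num
    · rw [h', h'']; norm_num
    · exact absurd (h'.trans h''.symm) hj
  rw [hpar] at h1
  rcases neg_one_pow_eq_or ℚ j with hh | hh <;> rw [hh] at h1 <;> linarith

lemma sum_antidiagonalTuple_succ {M : Type*} [AddCommMonoid M] (n N : ℕ)
    (f : (Fin (n + 1) → ℕ) → M) :
    ∑ t ∈ Finset.Nat.antidiagonalTuple (n + 1) N, f t =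
      ∑ kj ∈ Finset.HasAntidiagonal.antidiagonal N, ∑ t ∈ Finset.Nat.antidiagonalTuple n kj.2,
        f (Fin.cons kj.1 t) := by
  rw [Finset.sum_sigma']
  refine Finset.sum_nbij'
    (fun t => Sigma.mk (t 0, ∑ i : Fin n, Fin.tail t i) (Fin.tail t))
    (fun x => Fin.cons x.1.1 x.2) ?_ ?_ ?_ ?_ ?_
  · intro t ht
    rw [Finset.Nat.mem_antidiagonalTuple] at ht
    rw [Finset.mem_sigma]
    refine ⟨?_, ?_⟩
    · simp only [Finset.HasAntidiagonal.mem_antidiagonal]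
      rw [← ht, Fin.sum_univ_succ]
      rfl
    · rw [Finset.Nat.mem_antidiagonalTuple]
  · rintro ⟨⟨k, j0⟩, t⟩ hx
    rw [Finset.mem_sigma, Finset.HasAntidiagonal.mem_antidiagonal, Finset.Nat.mem_antidiagonalTuple] at hx
    rw [Finset.Nat.mem_antidiagonalTuple, Fin.sum_univ_succ]
    simp only [Fin.cons_succ, Fin.cons_zero]
    simp only at hx
    rw [show (∑ i : Fin n, t i) = j0 from hx.2, hx.1]
  · intro t _
    exact Fin.cons_self_tail t
  · rintro ⟨⟨k, j0⟩, t⟩ hx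
    rw [Finset.mem_sigma, Finset.Nat.mem_antidiagonalTuple] at hx
    simp only at hx
    simp only [Fin.cons_zero, Fin.tail_cons]
    rw [show (∑ i : Fin n, t i) = j0 from hx.2]
  · intro t _
    rw [Fin.cons_self_tail]
lemma exists_poly (m : ℕ) : ∀ (a : Fin (m + 1) → ℕ), (∀ i, 1 ≤ a i) →
    ∃ q : Polynomial ℚ,
      (∀ N : ℕ, q.eval (N : ℚ) =
        ∑ t ∈ Finset.Nat.antidiagonalTuple (m + 1) N, ∏ i, (t i : ℚ) ^ a i) ∧
      q.natDegree ≤ m + ∑ i, a i ∧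
      (∀ x : ℚ, q.eval (-x) = (-1) ^ (m + ∑ i, a i) * q.eval x) := by
  induction m with
  | zero =>
      intro a ha
      refine ⟨Polynomial.X ^ (a 0), ?_, ?_, ?_⟩
      · intro N
        rw [Finset.Nat.antidiagonalTuple_one, Finset.sum_singleton]
        simp [Fin.prod_univ_one]
      · simp [natDegree_X_pow, Fin.sum_univ_one]
      · intro x
        rw [show (∑ i : Fin (0 + 1), a i) = a 0 from by simp]
        simp only [eval_pow, eval_X, zero_add]
        rw [neg_pow]
  | succ m ih =>
      intro a ha
      obtain ⟨q, hq1, hq2, hq3⟩ := ih (Fin.tail a) (fun i => ha i.succ)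
      set d := m + ∑ i, Fin.tail a i with hd
      have hA : (∑ i, a i) = a 0 + ∑ i, Fin.tail a i := by
        rw [Fin.sum_univ_succ]
        rfl
      have hcoeff0 : q.coeff 0 = 0 := by
        rw [Polynomial.coeff_zero_eq_eval_zero]
        have h0 := hq1 0
        rw [Nat.cast_zero] at h0
        rw [h0, Finset.Nat.antidiagonalTuple_zero_right, Finset.sum_singleton]
        apply Finset.prod_eq_zero (Finset.mem_univ (0 : Fin (m + 1)))
        simp only [Pi.zero_apply, Nat.cast_zero]
        have h1 : 1 ≤ Fin.tail a 0 := ha (Fin.succ 0)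
        exact zero_pow (by omega)
      refine ⟨∑ mm ∈ Finset.range (q.natDegree + 1),
        Polynomial.C (q.coeff mm) * Fab (a 0) mm, ?_, ?_, ?_⟩
      · intro N
        simp only [eval_finset_sum, eval_mul, eval_C]
        have step1 : ∀ mm ∈ Finset.range (q.natDegree + 1),
            q.coeff mm * (Fab (a 0) mm).eval (N : ℚ) =
            ∑ k ∈ Finset.range (N + 1),
              (k : ℚ) ^ (a 0) * (q.coeff mm * ((N - k : ℕ) : ℚ) ^ mm) := by
          intro mm _
          rw [Fab_eval, Finset.mul_sum]
          exact Finset.sum_congr rfl fun k _ => by ring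
        rw [Finset.sum_congr rfl step1, Finset.sum_comm]
        have step2 : ∀ k ∈ Finset.range (N + 1),
            (∑ mm ∈ Finset.range (q.natDegree + 1),
              (k : ℚ) ^ (a 0) * (q.coeff mm * ((N - k : ℕ) : ℚ) ^ mm)) =
            (k : ℚ) ^ (a 0) *
              ∑ t ∈ Finset.Nat.antidiagonalTuple (m + 1) (N - k),
                ∏ i, (t i : ℚ) ^ (Fin.tail a i) := by
          intro k _
          rw [← Finset.mul_sum, ← Polynomial.eval_eq_sum_range, hq1]
        rw [Finset.sum_congr rfl step2]
        rw [show (∑ k ∈ Finset.range (N + 1), (k : ℚ) ^ (a 0) *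
              ∑ t ∈ Finset.Nat.antidiagonalTuple (m + 1) (N - k),
                ∏ i, (t i : ℚ) ^ (Fin.tail a i)) =
            ∑ kj ∈ Finset.HasAntidiagonal.antidiagonal N, (kj.1 : ℚ) ^ (a 0) *
              ∑ t ∈ Finset.Nat.antidiagonalTuple (m + 1) kj.2,
                ∏ i, (t i : ℚ) ^ (Fin.tail a i) from
          (Finset.Nat.sum_antidiagonal_eq_sum_range_succ (fun k j =>
            (k : ℚ) ^ (a 0) * ∑ t ∈ Finset.Nat.antidiagonalTuple (m + 1) j,
              ∏ i, (t i : ℚ) ^ (Fin.tail a i)) N).symm]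
        rw [sum_antidiagonalTuple_succ (m + 1) N (fun t =>
          ∏ i : Fin (m + 2), (t i : ℚ) ^ (a i))]
        apply Finset.sum_congr rfl
        intro kj _
        rw [Finset.mul_sum]
        apply Finset.sum_congr rfl
        intro t _
        simp only [Fin.prod_univ_succ, Fin.cons_zero, Fin.cons_succ]
        rfl
      · refine natDegree_sum_le_of_forall_le _ _ fun mm hmm => ?_
        simp only [Finset.mem_range] at hmm
        refine (natDegree_C_mul_le _ _).trans ?_
        have := Fab_natDegree (a 0) mm
        have hq2' : q.natDegree ≤ m + ∑ i, Fin.tail a i := hq2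
        omega
      · intro x
        simp only [eval_finset_sum, eval_mul, eval_C]
        rw [Finset.mul_sum]
        apply Finset.sum_congr rfl
        intro mm hmm
        by_cases hc : q.coeff mm = 0
        · rw [hc]; ring
        · have hpar : mm % 2 = d % 2 := by
            by_contra h
            exact hc (parity_coeff hq3 h)
          have hmm1 : 1 ≤ mm := by
            rcases Nat.eq_zero_or_pos mm with h | h
            · exact absurd (h ▸ hcoeff0) hc
            · exact h
          rw [Fab_reflect (a 0) mm (ha 0) hmm1 x]
          rw [show ((-1 : ℚ)) ^ (a 0 + mm + 1) = (-1) ^ (m + 1 + ∑ i, a i) from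
            neg_one_pow_mod_eq (by omega)]
          ring
/-- For `n ≥ 1` and `a₁,...,aₙ ≥ 1`, the product
`δ₊^{(a₁)}(x) ⋯ δ₊^{(aₙ)}(x)` of the formal Fourier series `δ₊^{(s)}(x) = ∑_{k≥0} (ik)^s e^{ikx}`
equals `(-i)^{n-1} ∑_{j=1}^{n-1+∑aᵢ} C_j δ₊^{(j)}(x)`, where
`C_j = (-1)^{(n-1+∑aᵢ-j)/2} C̃_j` if `j ≡ n-1+∑aᵢ (mod 2)` and `0` otherwise,
with `C̃_j` the coefficients of the polynomial `C̃(N) = ∑_{k₁+...+kₙ=N} ∏ kᵢ^{aᵢ}`.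
The identity is stated coefficientwise: the coefficient of `e^{iNx}` on both sides agree
(for `N < 0` both sides vanish trivially). -/
theorem delta_plus_product (n : ℕ) (hn : 1 ≤ n) (a : Fin n → ℕ) (ha : ∀ i, 1 ≤ a i)
    (p : Polynomial ℚ)
    (hp : ∀ N : ℕ, p.eval (N : ℚ) =
        ∑ t ∈ Finset.Nat.antidiagonalTuple n N, ∏ i : Fin n, (t i : ℚ) ^ a i)
    (N : ℕ) :
    ∑ t ∈ Finset.Nat.antidiagonalTuple n N, ∏ i : Fin n, (Complex.I * (t i : ℂ)) ^ a i =
      (-Complex.I) ^ (n - 1) *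
        ∑ j ∈ Finset.Icc 1 (n - 1 + ∑ i, a i),
          (if j % 2 = (n - 1 + ∑ i, a i) % 2
            then (-1 : ℂ) ^ ((n - 1 + ∑ i, a i - j) / 2) * ((p.coeff j : ℚ) : ℂ)
            else 0) * (Complex.I * (N : ℂ)) ^ j := by
  obtain ⟨m, rfl⟩ : ∃ m, n = m + 1 := ⟨n - 1, by omega⟩
  simp only [Nat.add_sub_cancel]
  obtain ⟨q, hq1, hq2, hq3⟩ := exists_poly m a ha
  have hpq : p = q := poly_eq_of_nat_eval fun M => by rw [hp M, hq1 M]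
  rw [hpq]
  set A := ∑ i, a i with hA
  set S := m + A with hS
  -- constant coefficient of q vanishes
  have hc0 : q.coeff 0 = 0 := by
    rw [Polynomial.coeff_zero_eq_eval_zero]
    have h0 := hq1 0
    rw [Nat.cast_zero] at h0
    rw [h0, Finset.Nat.antidiagonalTuple_zero_right, Finset.sum_singleton]
    apply Finset.prod_eq_zero (Finset.mem_univ (0 : Fin (m + 1)))
    simp only [Pi.zero_apply, Nat.cast_zero]
    have h1 : 1 ≤ a 0 := ha 0
    exact zero_pow (by omega)
  -- expression of eval as a sum over Icc 1 S
  have h2 : q.eval (N : ℚ) = ∑ j ∈ Finset.Icc 1 S, q.coeff j * (N : ℚ) ^ j := by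
    rw [Polynomial.eval_eq_sum_range' (show q.natDegree < S + 1 by omega) (N : ℚ)]
    rw [show Finset.range (S + 1) = insert 0 (Finset.Icc 1 S) by
      ext j; simp only [Finset.mem_range, Finset.mem_insert, Finset.mem_Icc]; omega]
    rw [Finset.sum_insert (by simp), hc0, zero_mul, zero_add]
  -- LHS
  have hL : (∑ t ∈ Finset.Nat.antidiagonalTuple (m + 1) N,
        ∏ i : Fin (m + 1), (Complex.I * (t i : ℂ)) ^ a i) =
      Complex.I ^ A * ((q.eval (N : ℚ) : ℚ) : ℂ) := by
    have hprod : ∀ t : Fin (m + 1) → ℕ,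
        (∏ i : Fin (m + 1), (Complex.I * (t i : ℂ)) ^ a i) =
          Complex.I ^ A * ∏ i : Fin (m + 1), ((t i : ℂ)) ^ a i := by
      intro t
      rw [hA, ← Finset.prod_pow_eq_pow_sum, ← Finset.prod_mul_distrib]
      exact Finset.prod_congr rfl fun i _ => mul_pow _ _ _
    rw [Finset.sum_congr rfl fun t _ => hprod t, ← Finset.mul_sum]
    congr 1
    rw [hq1 N]
    push_cast
    rfl
  rw [hL, h2]
  push_cast
  rw [Finset.mul_sum, Finset.mul_sum]
  apply Finset.sum_congr rfl
  intro j hj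
  simp only [Finset.mem_Icc] at hj
  by_cases hpar : j % 2 = S % 2
  · rw [if_pos hpar, mul_pow]
    have hpow : (-Complex.I) ^ m * ((-1 : ℂ) ^ ((S - j) / 2) * Complex.I ^ j) =
        Complex.I ^ A := by
      have e1 : ((-1 : ℂ)) ^ ((S - j) / 2) = Complex.I ^ (S - j) := by
        have h2d : 2 * ((S - j) / 2) = S - j := by omega
        calc ((-1 : ℂ)) ^ ((S - j) / 2) = (Complex.I ^ 2) ^ ((S - j) / 2) := by
              rw [Complex.I_sq]
          _ = Complex.I ^ (2 * ((S - j) / 2)) := by rw [← pow_mul]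
          _ = Complex.I ^ (S - j) := by rw [h2d]
      rw [e1, ← pow_add, show S - j + j = S by omega]
      rw [hS, pow_add, neg_pow]
      have e2 : ((-1 : ℂ)) ^ m * (Complex.I ^ m * Complex.I ^ m) = 1 := by
        rw [← pow_add, ← two_mul, pow_mul, Complex.I_sq, ← mul_pow]
        norm_num
      calc ((-1 : ℂ)) ^ m * Complex.I ^ m * (Complex.I ^ m * Complex.I ^ A)
          = ((-1 : ℂ)) ^ m * (Complex.I ^ m * Complex.I ^ m) * Complex.I ^ A := by ring
        _ = Complex.I ^ A := by rw [e2, one_mul]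
    calc Complex.I ^ A * (((q.coeff j : ℚ) : ℂ) * (N : ℂ) ^ j)
        = ((-Complex.I) ^ m * ((-1 : ℂ) ^ ((S - j) / 2) * Complex.I ^ j)) *
            (((q.coeff j : ℚ) : ℂ) * (N : ℂ) ^ j) := by rw [hpow]
      _ = (-Complex.I) ^ m *
            ((-1 : ℂ) ^ ((S - j) / 2) * ((q.coeff j : ℚ) : ℂ) *
              (Complex.I ^ j * (N : ℂ) ^ j)) := by ring
  · rw [if_neg hpar]
    have hcj : q.coeff j = 0 := parity_coeff hq3 hpar
    rw [hcj]
    push_cast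
    ring
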